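/- If there are at most two attributes (k ≤ 2), then every attribute hiding scheme is equivalent to a tree-structured scheme; that is, for every finite set O of natural bundles with pairwise disjoint member sets there exists a tree-structured scheme containing exactly the same non-unit bundles as O. -/

import Mathlib

/-- A natural bundle: each attribute either takes a specific value (`some a`) or is
hidden (`none`). -/
abbrev Bundle (k : ℕ) (C : Fin k → ℕ) := ∀ i : Fin k, Option (Fin (C i))

/-- The set of instantiations belonging to a natural bundle. -/
def members {k : ℕ} {C : Fin k → ℕ} (b : Bundle k C) : Finset (∀ i : Fin k, Fin (C i)) :=
  Finset.univ.filter fun ω => ∀ i, b i = none ∨ b i = some (ω i)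

/-- An attribute hiding scheme: a finite set of natural bundles with pairwise disjoint
member sets. -/
def IsScheme {k : ℕ} {C : Fin k → ℕ} (O : Finset (Bundle k C)) : Prop :=
  ∀ b ∈ O, ∀ b' ∈ O, b ≠ b' → Disjoint (members b) (members b')

/-- `splitB b x` : the bundles obtained from `b` by revealing the hidden attribute `x`. -/
def splitB {k : ℕ} {C : Fin k → ℕ} (b : Bundle k C) (x : Fin k) : Finset (Bundle k C) :=
  Finset.univ.image fun j : Fin (C x) => Function.update b x (some j)

/-- Tree-structured schemes: obtained from `{⊤}` (all attributes hidden) by recursively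
splitting a bundle along one of its hidden attributes. -/
inductive IsTree (k : ℕ) (C : Fin k → ℕ) : Finset (Bundle k C) → Prop
  | top : IsTree k C {(fun _ => none : Bundle k C)}
  | split (O : Finset (Bundle k C)) (b : Bundle k C) (x : Fin k) :
      IsTree k C O → b ∈ O → b x = none → IsTree k C ((O.erase b) ∪ splitB b x)

section Aux

variable {k : ℕ} {C : Fin k → ℕ}

lemma mem_members_iff {b : Bundle k C} {ω : ∀ i : Fin k, Fin (C i)} :
    ω ∈ members b ↔ ∀ i, b i = none ∨ b i = some (ω i) := by
  simp [members]

lemma members_nonempty (hC : ∀ i, 2 ≤ C i) (b : Bundle k C) : (members b).Nonempty := by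
  refine ⟨fun i => (b i).getD ⟨0, by have := hC i; omega⟩, ?_⟩
  rw [mem_members_iff]
  intro i
  cases h : b i with
  | none => exact Or.inl rfl
  | some v => exact Or.inr (by simp [h])

lemma scheme_top (hC : ∀ i, 2 ≤ C i) {O : Finset (Bundle k C)} (hO : IsScheme O)
    (htop : (fun _ => none : Bundle k C) ∈ O) : O = {(fun _ => none : Bundle k C)} := by
  apply Finset.eq_singleton_iff_unique_mem.mpr
  refine ⟨htop, fun b hb => ?_⟩
  by_contra hne
  have hd := hO b hb _ htop hne
  obtain ⟨ω, hω⟩ := members_nonempty hC b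
  have hmem : ω ∈ members (fun _ => none : Bundle k C) :=
    mem_members_iff.mpr fun i => Or.inl rfl
  exact Finset.disjoint_left.mp hd hω hmem

/-- The bundle revealing only attribute `x` with value `a`. -/
def rowB (x : Fin k) (a : Fin (C x)) : Bundle k C :=
  Function.update (fun _ => none) x (some a)

lemma rowB_x (x : Fin k) (a : Fin (C x)) : rowB (C := C) x a x = some a :=
  Function.update_self ..

lemma rowB_ne {x y : Fin k} (h : y ≠ x) (a : Fin (C x)) : rowB (C := C) x a y = none :=
  Function.update_of_ne h _ _

lemma rowB_inj (x : Fin k) : Function.Injective (rowB (C := C) x) := by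
  intro a a' h
  have := congrFun h x
  rw [rowB_x, rowB_x] at this
  exact Option.some_injective _ this

/-- Tree scheme: all rows along `x`, with rows indexed by `B` fully split at `y`. -/
def TB (x y : Fin k) (B : Finset (Fin (C x))) : Finset (Bundle k C) :=
  (Finset.univ \ B).image (rowB x) ∪
    B.biUnion fun a => Finset.univ.image fun c : Fin (C y) =>
      Function.update (rowB x a) y (some c)

lemma isTree_TB {x y : Fin k} (hxy : x ≠ y) (B : Finset (Fin (C x))) :
    IsTree k C (TB x y B) := by
  classical
  induction B using Finset.induction with
  | empty =>
      have h := IsTree.split (k := k) (C := C) {(fun _ => none)} (fun _ => none) x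
        IsTree.top (Finset.mem_singleton_self _) rfl
      have he : ((({(fun _ => none : Bundle k C)} : Finset (Bundle k C)).erase (fun _ => none)) ∪
          splitB (fun _ => none) x) = TB x y ∅ := by
        simp only [TB, Finset.erase_singleton, Finset.empty_union, Finset.sdiff_empty,
          Finset.biUnion_empty, Finset.union_empty, splitB]
        rfl
      rwa [he] at h
  | @insert a B haB ih =>
      have hmem : rowB x a ∈ TB x y B := by
        apply Finset.mem_union_left
        exact Finset.mem_image_of_mem _ (by simp [haB])
      have hnone : rowB x a y = none := rowB_ne (Ne.symm hxy) a
      have h := IsTree.split _ (rowB x a) y ih hmem hnone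
      have he : ((TB x y B).erase (rowB x a) ∪ splitB (rowB x a) y) = TB x y (insert a B) := by
        have e1 : (Finset.univ \ insert a B) = (Finset.univ \ B).erase a := by
          ext t
          simp only [Finset.mem_sdiff, Finset.mem_univ, true_and, Finset.mem_insert,
            Finset.mem_erase, not_or]
        have e3 : ((Finset.univ \ B).image (rowB x)).erase (rowB x a) =
            ((Finset.univ \ B).erase a).image (rowB x) :=
          (Finset.image_erase (rowB_inj x) _ _).symm
        have e4 : ((B.biUnion fun a' => Finset.univ.image fun c : Fin (C y) =>
            Function.update (rowB x a') y (some c)).erase (rowB x a)) =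
            B.biUnion fun a' => Finset.univ.image fun c : Fin (C y) =>
              Function.update (rowB x a') y (some c) := by
          apply Finset.erase_eq_of_notMem
          intro hcon
          simp only [Finset.mem_biUnion, Finset.mem_image, Finset.mem_univ, true_and] at hcon
          obtain ⟨a', _, c, hc⟩ := hcon
          have := congrFun hc y
          rw [Function.update_self, rowB_ne (Ne.symm hxy)] at this
          exact Option.some_ne_none _ this
        have e5 : splitB (rowB x a) y =
            Finset.univ.image fun c : Fin (C y) => Function.update (rowB x a) y (some c) := rfl
        rw [TB, Finset.erase_union_distrib, e3, e4, e5]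
        rw [TB, e1, Finset.biUnion_insert, Finset.union_assoc,
          Finset.union_comm (Finset.univ.image fun c : Fin (C y) =>
            Function.update (rowB x a) y (some c))]
      rwa [he] at h

lemma filter_TB {x y : Fin k} (hxy : x ≠ y) (hcov : ∀ i, i = x ∨ i = y)
    (B : Finset (Fin (C x))) :
    (TB x y B).filter (fun b => ∃ i, b i = none) = (Finset.univ \ B).image (rowB x) := by
  classical
  ext b
  simp only [Finset.mem_filter, TB, Finset.mem_union, Finset.mem_image, Finset.mem_biUnion,
    Finset.mem_sdiff, Finset.mem_univ, true_and]
  constructor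
  · rintro ⟨h | h, hn⟩
    · exact h
    · exfalso
      obtain ⟨a', _, c, rfl⟩ := h
      obtain ⟨i, hi⟩ := hn
      rcases hcov i with rfl | rfl
      · rw [Function.update_of_ne hxy, rowB_x] at hi
        exact Option.some_ne_none _ hi
      · rw [Function.update_self] at hi
        exact Option.some_ne_none _ hi
  · rintro ⟨a, ha, rfl⟩
    exact ⟨Or.inl ⟨a, ha, rfl⟩, y, rowB_ne (Ne.symm hxy) a⟩

lemma rows_or_cols {x y : Fin k} (hxy : x ≠ y) (hcov : ∀ i, i = x ∨ i = y)
    (hC : ∀ i, 2 ≤ C i) {O : Finset (Bundle k C)} (hO : IsScheme O)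
    (htop : (fun _ => none : Bundle k C) ∉ O) :
    (∀ b ∈ O, b x ≠ none) ∨ (∀ b ∈ O, b y ≠ none) := by
  by_contra h
  push_neg at h
  obtain ⟨⟨b, hb, hbx⟩, ⟨b', hb', hby⟩⟩ := h
  obtain ⟨c, hc⟩ : ∃ c, b y = some c := by
    cases hby2 : b y with
    | none =>
        exfalso; apply htop
        have : b = (fun _ => none : Bundle k C) := by
          funext i; rcases hcov i with rfl | rfl <;> assumption
        rwa [this] at hb
    | some c => exact ⟨c, rfl⟩
  obtain ⟨a, ha⟩ : ∃ a, b' x = some a := by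
    cases hbx2 : b' x with
    | none =>
        exfalso; apply htop
        have : b' = (fun _ => none : Bundle k C) := by
          funext i; rcases hcov i with rfl | rfl <;> assumption
        rwa [this] at hb'
    | some a => exact ⟨a, rfl⟩
  have hne : b ≠ b' := by
    intro he
    rw [he, ha] at hbx
    exact Option.some_ne_none _ hbx
  obtain ⟨ω, hωb, hωb'⟩ : ∃ ω, ω ∈ members b ∧ ω ∈ members b' := by
    refine ⟨fun i => (b i).getD ((b' i).getD ⟨0, by have := hC i; omega⟩), ?_, ?_⟩
    · rw [mem_members_iff]
      intro i
      cases h : b i with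
      | none => exact Or.inl rfl
      | some v => exact Or.inr (by simp [h])
    · rw [mem_members_iff]
      intro i
      rcases hcov i with rfl | rfl
      · exact Or.inr (by simp [hbx, ha])
      · exact Or.inl hby
  exact Finset.disjoint_left.mp (hO b hb b' hb' hne) hωb hωb'

lemma glue {x y : Fin k} (hxy : x ≠ y) (hcov : ∀ i, i = x ∨ i = y)
    {O : Finset (Bundle k C)} (hP : ∀ b ∈ O, b x ≠ none) :
    ∃ O' : Finset (Bundle k C), IsTree k C O' ∧
      O'.filter (fun b => ∃ i, b i = none) = O.filter (fun b => ∃ i, b i = none) := by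
  classical
  set A : Finset (Fin (C x)) := Finset.univ.filter (fun a => rowB x a ∈ O) with hA
  refine ⟨TB x y (Finset.univ \ A), isTree_TB hxy _, ?_⟩
  rw [filter_TB hxy hcov]
  have hAA : Finset.univ \ (Finset.univ \ A) = A := by
    rw [Finset.sdiff_sdiff_self_left, Finset.univ_inter]
  rw [hAA]
  ext b
  simp only [Finset.mem_image, Finset.mem_filter, hA, Finset.mem_univ, true_and]
  constructor
  · rintro ⟨a, haO, rfl⟩
    exact ⟨haO, y, rowB_ne (Ne.symm hxy) a⟩
  · rintro ⟨hbO, i, hi⟩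
    have hx := hP b hbO
    cases hbx : b x with
    | none => exact absurd hbx hx
    | some a =>
      have hby : b y = none := by
        rcases hcov i with rfl | rfl
        · exact absurd hi hx
        · exact hi
      have hbeq : b = rowB x a := by
        funext j
        rcases hcov j with rfl | rfl
        · rw [hbx, rowB_x]
        · rw [hby, rowB_ne (Ne.symm hxy)]
      exact ⟨a, hbeq ▸ hbO, hbeq.symm⟩

end Aux

/-- With at most two attributes, every attribute hiding scheme is equivalent to a
tree-structured scheme (same set of non-unit bundles, i.e. bundles with some hidden
attribute). -/
theorem stmt6 (k : ℕ) (hk : k ≤ 2) (C : Fin k → ℕ) (hC : ∀ i, 2 ≤ C i)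
    (O : Finset (Bundle k C)) (hO : IsScheme O) :
    ∃ O' : Finset (Bundle k C), IsTree k C O' ∧
      O'.filter (fun b => ∃ i, b i = none) = O.filter (fun b => ∃ i, b i = none) := by
  classical
  interval_cases k
  · -- k = 0
    refine ⟨{(fun _ => none : Bundle 0 C)}, IsTree.top, ?_⟩
    have h0 : ∀ (s : Finset (Bundle 0 C)), s.filter (fun b => ∃ i, b i = none) = ∅ :=
      fun s => Finset.filter_false_of_mem (fun b _ h => h.choose.elim0)
    rw [h0, h0]
  · -- k = 1
    by_cases htop : (fun _ => none : Bundle 1 C) ∈ O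
    · exact ⟨O, (scheme_top hC hO htop) ▸ IsTree.top, rfl⟩
    · refine ⟨_, IsTree.split {(fun _ => none : Bundle 1 C)} (fun _ => none) 0
        IsTree.top (Finset.mem_singleton_self _) rfl, ?_⟩
      have h1 : (((({(fun _ => none : Bundle 1 C)} : Finset (Bundle 1 C)).erase
          (fun _ => none)) ∪ splitB (fun _ => none) 0).filter
          (fun b => ∃ i, b i = none)) = ∅ := by
        apply Finset.filter_false_of_mem
        intro b hb hcon
        simp only [Finset.erase_singleton, Finset.empty_union, splitB,
          Finset.mem_image, Finset.mem_univ, true_and] at hb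
        obtain ⟨j, rfl⟩ := hb
        obtain ⟨i, hi⟩ := hcon
        have hi0 : i = 0 := Subsingleton.elim _ _
        rw [hi0, Function.update_self] at hi
        exact Option.some_ne_none _ hi
      have h2 : O.filter (fun b => ∃ i, b i = none) = ∅ := by
        apply Finset.filter_false_of_mem
        intro b hb hcon
        obtain ⟨i, hi⟩ := hcon
        apply htop
        have hbeq : b = (fun _ => none : Bundle 1 C) := by
          funext j
          have : j = i := Subsingleton.elim _ _
          rw [this]; exact hi
        rwa [hbeq] at hb
      rw [h1, h2]
  · -- k = 2
    by_cases htop : (fun _ => none : Bundle 2 C) ∈ O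
    · exact ⟨O, (scheme_top hC hO htop) ▸ IsTree.top, rfl⟩
    · rcases rows_or_cols (x := 0) (y := 1) (by decide) (by decide) hC hO htop with hP | hP
      · exact glue (x := 0) (y := 1) (by decide) (by decide) hP
      · exact glue (x := 1) (y := 0) (by decide) (by decide) hP
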